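/- arXiv:gr-qc/0406121 — 2 statements merged into one kernel-verified Lean document; each statement's English description precedes it below -/
import Mathlib

section
/- Let v : ℝ → M_r(ℂ) be a smooth curve of invertible r×r Hermitian matrices, r ≥ 2, satisfying the geodesic condition that for all indices, Σ over permutations giving ε_{AB…C} ε_{A'B'…C'} v̇^{BB'} v^{CC'} ⋯ v^{DD'} = 0 (equivalently, the symmetrized contraction of v̇ with r−1 copies of v against the rank-r chronometric tensor vanishes). Then v̇ = 0, i.e. v is constant. -/
attribute [local instance] Matrix.normedAddCommGroup Matrix.normedSpace

/-- The chronometric tensor: the full polarization of the determinant,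
a symmetric r-linear form with chron r (fun _ => u) = r! * det u. -/
noncomputable def chron (r : ℕ) (u : Fin r → Matrix (Fin r) (Fin r) ℂ) : ℂ :=
  ∑ S : Finset (Fin r), (-1 : ℂ) ^ (r - S.card) * (∑ i ∈ S, u i).det

open Matrix Finset

lemma IE_sum (r : ℕ) (f : Fin r → Fin r) :
    (∑ S : Finset (Fin r), if (∀ i, f i ∈ S) then ((-1 : ℂ)) ^ (r - S.card) else 0)
      = if Function.Surjective f then 1 else 0 := by
  have key : ∀ S : Finset (Fin r), (∀ i, f i ∈ S) ↔ Sᶜ ⊆ (Finset.image f Finset.univ)ᶜ := by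
    intro S
    rw [Finset.compl_subset_compl]
    constructor
    · intro h x hx
      rcases Finset.mem_image.mp hx with ⟨i, -, rfl⟩
      exact h i
    · intro h i
      exact h (Finset.mem_image_of_mem f (Finset.mem_univ i))
  rw [Finset.sum_nbij' (i := fun S => Sᶜ) (j := fun S => Sᶜ)
      (t := Finset.univ) (g := fun T => if T ⊆ (Finset.image f Finset.univ)ᶜ then ((-1:ℂ)) ^ T.card else 0)]
  · rw [← Finset.sum_filter]
    have : Finset.univ.filter (fun T : Finset (Fin r) => T ⊆ (Finset.image f Finset.univ)ᶜ)
        = ((Finset.image f Finset.univ)ᶜ).powerset := by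
      ext T; simp [Finset.mem_powerset]
    rw [this]
    have hcast : (∑ a ∈ ((Finset.image f Finset.univ)ᶜ).powerset, (-1 : ℂ) ^ a.card)
        = ((∑ a ∈ ((Finset.image f Finset.univ)ᶜ).powerset, (-1 : ℤ) ^ a.card : ℤ) : ℂ) := by
      push_cast; rfl
    rw [hcast, Finset.sum_powerset_neg_one_pow_card]
    have h2 : ((Finset.image f Finset.univ)ᶜ = (∅ : Finset (Fin r)))
        ↔ Function.Surjective f := by
      rw [Finset.compl_eq_empty_iff]
      constructor
      · intro h x
        have : x ∈ Finset.image f Finset.univ := by rw [h]; exact Finset.mem_univ x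
        rcases Finset.mem_image.mp this with ⟨i, -, rfl⟩; exact ⟨i, rfl⟩
      · intro h
        ext x; simp only [Finset.mem_image, Finset.mem_univ, iff_true, true_and]
        rcases h x with ⟨i, rfl⟩; exact ⟨i, rfl⟩
    simp [h2]
  · intros; exact Finset.mem_univ _
  · intros; exact Finset.mem_univ _
  · intros; simp
  · intros; simp
  · intro S _
    have hc : (Sᶜ).card = r - S.card := by simpa using Finset.card_compl S
    rw [if_congr (key S) rfl rfl, hc]

lemma det_sum_eq (r : ℕ) (a : Fin r → Matrix (Fin r) (Fin r) ℂ) (S : Finset (Fin r)) :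
    (∑ i ∈ S, a i).det
      = ∑ f ∈ Fintype.piFinset (fun _ : Fin r => S),
          (Matrix.of fun i j => a (f i) i j).det := by
  have := (Matrix.detRowAlternating :
      (Fin r → ℂ) [⋀^Fin r]→ₗ[ℂ] ℂ).toMultilinearMap.map_sum_finset
      (fun k i => a i k) (fun _ : Fin r => S)
  convert this using 2
  have e : (∑ i ∈ S, a i) = fun i => ∑ j ∈ S, a j i := by
    funext i
    exact Finset.sum_apply i S a
  rw [e]
  rfl
  rfl

lemma chron_eq_perm (r : ℕ) (a : Fin r → Matrix (Fin r) (Fin r) ℂ) :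
    chron r a = ∑ σ : Equiv.Perm (Fin r), (Matrix.of fun i j => a (σ i) i j).det := by
  unfold chron
  simp_rw [det_sum_eq]
  have step1 : ∀ S : Finset (Fin r),
      (∑ f ∈ Fintype.piFinset (fun _ : Fin r => S), (Matrix.of fun i j => a (f i) i j).det)
      = ∑ f : Fin r → Fin r, if (∀ i, f i ∈ S) then (Matrix.of fun i j => a (f i) i j).det else 0 := by
    intro S
    rw [← Finset.sum_filter]
    apply Finset.sum_congr _ (fun _ _ => rfl)
    ext f
    simp [Fintype.mem_piFinset]
  simp_rw [step1, Finset.mul_sum]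
  rw [Finset.sum_comm]
  have step2 : ∀ f : Fin r → Fin r,
      (∑ S : Finset (Fin r), (-1:ℂ) ^ (r - S.card) *
        (if (∀ i, f i ∈ S) then (Matrix.of fun i j => a (f i) i j).det else 0))
      = (if Function.Surjective f then 1 else 0) * (Matrix.of fun i j => a (f i) i j).det := by
    intro f
    rw [← IE_sum r f, Finset.sum_mul]
    refine Finset.sum_congr rfl fun S _ => ?_
    by_cases h : ∀ i, f i ∈ S <;> simp [h]
  simp_rw [step2]
  classical
  have step3 : (∑ f : Fin r → Fin r, (if Function.Surjective f then (1:ℂ) else 0) *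
        (Matrix.of fun i j => a (f i) i j).det)
      = ∑ f ∈ Finset.univ.filter (fun f : Fin r → Fin r => Function.Surjective f),
          (Matrix.of fun i j => a (f i) i j).det := by
    rw [Finset.sum_filter]
    refine Finset.sum_congr rfl fun f _ => ?_
    by_cases h : Function.Surjective f <;> simp [h]
  rw [step3]
  refine (Finset.sum_bij' (fun (f : Fin r → Fin r) (hf : f ∈ Finset.univ.filter
      (fun f : Fin r → Fin r => Function.Surjective f)) =>
        Equiv.ofBijective f (Finite.surjective_iff_bijective.mp (by simpa using hf)))
      (fun (σ : Equiv.Perm (Fin r)) _ => ⇑σ) ?_ ?_ ?_ ?_ ?_)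
  · intros; exact Finset.mem_univ _
  · intro σ _; simp [σ.surjective]
  · intro f hf; rfl
  · intro σ _
    ext x
    rfl
  · intro f hf; rfl

lemma det_updateRow_expand {r : ℕ} (A : Matrix (Fin r) (Fin r) ℂ) (p : Fin r) (x : Fin r → ℂ) :
    (A.updateRow p x).det = ∑ j, x j * (A.updateRow p (Pi.single j 1)).det := by
  have hx : x = ∑ j, x j • (Pi.single j 1 : Fin r → ℂ) := by
    funext k
    simp [Finset.sum_apply, Pi.single_apply, mul_comm]
  conv_lhs => rw [hx]
  have h2 := MultilinearMap.map_update_sum (Matrix.detRowAlternating :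
      (Fin r → ℂ) [⋀^Fin r]→ₗ[ℂ] ℂ).toMultilinearMap (Finset.univ : Finset (Fin r)) p
      (fun j => x j • (Pi.single j 1 : Fin r → ℂ)) A
  have h3 : ∀ j : Fin r,
      (Matrix.detRowAlternating : (Fin r → ℂ) [⋀^Fin r]→ₗ[ℂ] ℂ).toMultilinearMap
        (Function.update A p (x j • (Pi.single j 1 : Fin r → ℂ)))
      = x j * (A.updateRow p (Pi.single j 1)).det := by
    intro j
    exact (MultilinearMap.map_update_smul _ A p (x j) (Pi.single j 1)).trans rfl
  calc (A.updateRow p (∑ j, x j • (Pi.single j 1 : Fin r → ℂ))).det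
      = ∑ j, (Matrix.detRowAlternating : (Fin r → ℂ) [⋀^Fin r]→ₗ[ℂ] ℂ).toMultilinearMap
        (Function.update A p (x j • (Pi.single j 1 : Fin r → ℂ))) := h2
    _ = ∑ j, x j * (A.updateRow p (Pi.single j 1)).det := Finset.sum_congr rfl fun j _ => h3 j



lemma det_base {r : ℕ} {p q : Fin r} (hpq : p ≠ q) (j k : Fin r) :
    (((1 : Matrix (Fin r) (Fin r) ℂ).updateRow p (Pi.single j 1)).updateRow q (Pi.single k 1)).det
      = (if j = p ∧ k = q then 1 else if j = q ∧ k = p then -1 else 0) := by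
  set B := ((1 : Matrix (Fin r) (Fin r) ℂ).updateRow p (Pi.single j 1)).updateRow q (Pi.single k 1)
    with hB
  have hone : ∀ i : Fin r, (1 : Matrix (Fin r) (Fin r) ℂ) i = Pi.single i 1 := by
    intro i; funext l; simp [Matrix.one_apply, Pi.single_apply, eq_comm]
  have hBq : B q = Pi.single k 1 := Matrix.updateRow_self
  have hBp : B p = Pi.single j 1 := by
    rw [hB, Matrix.updateRow_ne hpq, Matrix.updateRow_self]
  have hBi : ∀ i : Fin r, i ≠ p → i ≠ q → B i = Pi.single i 1 := by
    intro i hip hiq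
    rw [hB, Matrix.updateRow_ne hiq, Matrix.updateRow_ne hip, hone]
  by_cases hjp : j = p
  · by_cases hkq : k = q
    · have hB1 : B = 1 := by
        funext i
        by_cases hiq : i = q
        · rw [hiq, hBq, hkq, hone]
        · by_cases hip : i = p
          · rw [hip, hBp, hjp, hone]
          · rw [hBi i hip hiq, hone]
      rw [hB1, Matrix.det_one, if_pos ⟨hjp, hkq⟩]
    · rw [if_neg (by tauto)]
      rw [if_neg (by rintro ⟨h1, h2⟩; exact hpq (hjp.symm.trans h1))]
      by_cases hkp : k = p
      · exact Matrix.det_zero_of_row_eq hpq (by rw [hBp, hBq, hjp, hkp])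
      · exact Matrix.det_zero_of_row_eq (fun h => hkq h.symm)
          (by rw [hBq, hBi k hkp hkq])
  · by_cases hjq : j = q
    · by_cases hkp : k = p
      · rw [if_neg (by tauto), if_pos ⟨hjq, hkp⟩]
        have hB2 : B = (1 : Matrix (Fin r) (Fin r) ℂ).submatrix (Equiv.swap p q) id := by
          funext i l
          rw [Matrix.submatrix_apply, id]
          by_cases hiq : i = q
          · rw [hiq, Equiv.swap_apply_right, hone, hBq, hkp]
          · by_cases hip : i = p
            · rw [hip, Equiv.swap_apply_left, hone, hBp, hjq]
            · rw [Equiv.swap_apply_of_ne_of_ne hip hiq, hone, ← hBi i hip hiq]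
        rw [hB2]
        rw [Matrix.det_permute (Equiv.swap p q) (1 : Matrix (Fin r) (Fin r) ℂ)]
        simp [Equiv.Perm.sign_swap hpq]
      · rw [if_neg (by tauto), if_neg (by tauto)]
        by_cases hkq : k = q
        · exact Matrix.det_zero_of_row_eq hpq (by rw [hBp, hBq, hjq, hkq])
        · exact Matrix.det_zero_of_row_eq (fun h => hkq h.symm)
            (by rw [hBq, hBi k hkp hkq])
    · rw [if_neg (by tauto), if_neg (by tauto)]
      exact Matrix.det_zero_of_row_eq (fun h : p = j => hjp h.symm)
        (by rw [hBp, hBi j hjp hjq])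

lemma updateRow_swap {r : ℕ} (A : Matrix (Fin r) (Fin r) ℂ) {p q : Fin r} (hpq : p ≠ q)
    (x y : Fin r → ℂ) :
    (A.updateRow p x).updateRow q y = (A.updateRow q y).updateRow p x := by
  funext i
  by_cases hiq : i = q
  · rw [hiq, Matrix.updateRow_self, Matrix.updateRow_ne (Ne.symm hpq), Matrix.updateRow_self]
  · by_cases hip : i = p
    · rw [hip, Matrix.updateRow_ne hpq, Matrix.updateRow_self, Matrix.updateRow_self]
    · rw [Matrix.updateRow_ne hiq, Matrix.updateRow_ne hip, Matrix.updateRow_ne hip,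
        Matrix.updateRow_ne hiq]

lemma det_two_row {r : ℕ} {p q : Fin r} (hpq : p ≠ q) (x y : Fin r → ℂ) :
    (((1 : Matrix (Fin r) (Fin r) ℂ).updateRow p x).updateRow q y).det
      = x p * y q - x q * y p := by
  rw [det_updateRow_expand]
  have hterm : ∀ k : Fin r,
      (((1 : Matrix (Fin r) (Fin r) ℂ).updateRow p x).updateRow q (Pi.single k 1)).det
        = (if k = q then x p else 0) - (if k = p then x q else 0) := by
    intro k
    rw [updateRow_swap _ hpq, det_updateRow_expand]
    have : ∀ j : Fin r,
        ((((1 : Matrix (Fin r) (Fin r) ℂ).updateRow q (Pi.single k 1))).updateRow p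
          (Pi.single j 1)).det
        = (if j = p ∧ k = q then 1 else if j = q ∧ k = p then -1 else 0) := by
      intro j
      rw [← updateRow_swap _ hpq, det_base hpq]
    simp_rw [this]
    by_cases hkq : k = q
    · have hkp : ¬ k = p := by rw [hkq]; exact Ne.symm hpq
      simp [hkq, hkp, Finset.sum_ite_eq', Ne.symm hpq]
    · by_cases hkp : k = p
      · simp [hkq, hkp, hpq, Finset.sum_ite_eq']
      · simp [hkq, hkp]
  simp_rw [hterm]
  simp [mul_sub, Finset.sum_sub_distrib, Finset.mul_sum, mul_ite, Finset.sum_ite_eq',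
    mul_comm]

lemma perm_exists {r : ℕ} (z o : Fin r) (hzo : z ≠ o) (a b : Fin r) (hab : a ≠ b) :
    ∃ σ : Equiv.Perm (Fin r), σ z = a ∧ σ o = b := by
  set c := Equiv.swap z a b with hc
  have hswapc : Equiv.swap z a c = b := by rw [hc, Equiv.swap_apply_self]
  have hzc : z ≠ c := by
    intro h
    have h2 : a = Equiv.swap z a c := by rw [← h]; exact (Equiv.swap_apply_left z a).symm
    rw [hswapc] at h2
    exact hab h2
  refine ⟨(Equiv.swap o c).trans (Equiv.swap z a), ?_, ?_⟩
  · simp only [Equiv.trans_apply]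
    rw [Equiv.swap_apply_of_ne_of_ne hzo hzc, Equiv.swap_apply_left]
  · simp only [Equiv.trans_apply]
    rw [Equiv.swap_apply_left, hswapc]

lemma card_fiber_eq {r : ℕ} (z o : Fin r) (a q q' : Fin r) (hq : q ≠ a) (hq' : q' ≠ a) :
    (Finset.univ.filter (fun σ : Equiv.Perm (Fin r) => σ z = a ∧ σ o = q)).card
      = (Finset.univ.filter (fun σ : Equiv.Perm (Fin r) => σ z = a ∧ σ o = q')).card := by
  apply Finset.card_bij' (fun σ _ => Equiv.swap q q' * σ) (fun σ _ => Equiv.swap q q' * σ)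
  · intro σ hσ
    simp only [Finset.mem_filter, Finset.mem_univ, true_and] at hσ ⊢
    constructor
    · rw [Equiv.Perm.mul_apply, hσ.1, Equiv.swap_apply_of_ne_of_ne (Ne.symm hq) (Ne.symm hq')]
    · rw [Equiv.Perm.mul_apply, hσ.2, Equiv.swap_apply_left]
  · intro σ hσ
    simp only [Finset.mem_filter, Finset.mem_univ, true_and] at hσ ⊢
    constructor
    · rw [Equiv.Perm.mul_apply, hσ.1, Equiv.swap_apply_of_ne_of_ne (Ne.symm hq) (Ne.symm hq')]
    · rw [Equiv.Perm.mul_apply, hσ.2, Equiv.swap_apply_right]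
  · intro σ _; rw [← mul_assoc, Equiv.swap_mul_self, one_mul]
  · intro σ _; rw [← mul_assoc, Equiv.swap_mul_self, one_mul]

lemma chron_mul_left (r : ℕ) (v : Matrix (Fin r) (Fin r) ℂ)
    (c : Fin r → Matrix (Fin r) (Fin r) ℂ) :
    chron r (fun i => v * c i) = v.det * chron r c := by
  unfold chron
  rw [Finset.mul_sum]
  refine Finset.sum_congr rfl fun S _ => ?_
  rw [← Finset.mul_sum, Matrix.det_mul]
  ring

/-- If a smooth curve of invertible Hermitian matrices satisfies the geodesic
condition g(·, v̇, v, …, v) = 0 then v̇ = 0, i.e. v is constant. -/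
theorem stmt7 (r : ℕ) (hr : 2 ≤ r)
    (v w : ℝ → Matrix (Fin r) (Fin r) ℂ)
    (hherm : ∀ t, (v t).IsHermitian)
    (hinv : ∀ t, IsUnit (v t).det)
    (hderiv : ∀ t, HasDerivAt v (w t) t)
    (hgeo : ∀ (t : ℝ) (u : Matrix (Fin r) (Fin r) ℂ),
      chron r (fun i => if (i : ℕ) = 0 then u else if (i : ℕ) = 1 then w t else v t) = 0) :
    ∀ t, w t = 0 := by
  intro t
  classical
  set m : Matrix (Fin r) (Fin r) ℂ := (v t)⁻¹ * w t with hm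
  have hVm : v t * m = w t := by
    rw [hm, ← Matrix.mul_assoc, Matrix.mul_nonsing_inv (v t) (hinv t), Matrix.one_mul]
  have hc : ∀ u : Matrix (Fin r) (Fin r) ℂ,
      chron r (fun i => if (i : ℕ) = 0 then u else if (i : ℕ) = 1 then m else 1) = 0 := by
    intro u
    have h0 := hgeo t (v t * u)
    have heq : (fun i : Fin r => if (i : ℕ) = 0 then v t * u else if (i : ℕ) = 1 then w t else v t)
        = fun i : Fin r => v t * (if (i : ℕ) = 0 then u else if (i : ℕ) = 1 then m else 1) := by
      funext i
      split_ifs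
      · rfl
      · rw [hVm]
      · rw [Matrix.mul_one]
    rw [heq, chron_mul_left] at h0
    rcases mul_eq_zero.mp h0 with h | h
    · exact absurd h (hinv t).ne_zero
    · exact h
  have hr0 : 0 < r := by omega
  have hr1 : 1 < r := by omega
  set z : Fin r := ⟨0, hr0⟩ with hz
  set o : Fin r := ⟨1, hr1⟩ with ho
  have hzo : z ≠ o := by simp [hz, ho, Fin.ext_iff]
  -- key identity
  have key : ∀ u : Matrix (Fin r) (Fin r) ℂ,
      ∑ σ : Equiv.Perm (Fin r),
        (u (σ z) (σ z) * m (σ o) (σ o) - u (σ z) (σ o) * m (σ o) (σ z)) = 0 := by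
    intro u
    have h1 := hc u
    rw [chron_eq_perm] at h1
    have h2 : ∀ σ : Equiv.Perm (Fin r),
        (Matrix.of fun i j => (if ((σ i : Fin r) : ℕ) = 0 then u
            else if ((σ i : Fin r) : ℕ) = 1 then m else 1) i j).det
        = u (σ.symm z) (σ.symm z) * m (σ.symm o) (σ.symm o)
          - u (σ.symm z) (σ.symm o) * m (σ.symm o) (σ.symm z) := by
      intro σ
      have hpq : σ.symm z ≠ σ.symm o := fun h => hzo (σ.symm.injective h)
      have hM : (Matrix.of fun i j => (if ((σ i : Fin r) : ℕ) = 0 then u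
            else if ((σ i : Fin r) : ℕ) = 1 then m else 1) i j)
          = ((1 : Matrix (Fin r) (Fin r) ℂ).updateRow (σ.symm z)
              (u (σ.symm z))).updateRow (σ.symm o) (m (σ.symm o)) := by
        funext i j
        rw [Matrix.of_apply]
        by_cases hio : i = σ.symm o
        · have h3 : σ i = o := by rw [hio, Equiv.apply_symm_apply]
          have h4 : ((σ i : Fin r) : ℕ) = 1 := by rw [h3, ho]
          rw [if_neg (by rw [h4]; omega), if_pos h4, hio, Matrix.updateRow_self]
        · rw [Matrix.updateRow_ne hio]
          by_cases hiz : i = σ.symm z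
          · have h3 : σ i = z := by rw [hiz, Equiv.apply_symm_apply]
            have h4 : ((σ i : Fin r) : ℕ) = 0 := by rw [h3, hz]
            rw [if_pos h4, hiz, Matrix.updateRow_self]
          · have h3 : σ i ≠ z := fun h => hiz (by rw [← h, Equiv.symm_apply_apply])
            have h4 : σ i ≠ o := fun h => hio (by rw [← h, Equiv.symm_apply_apply])
            have h5 : ¬ ((σ i : Fin r) : ℕ) = 0 := fun h => h3 (Fin.ext (by rw [h, hz]))
            have h6 : ¬ ((σ i : Fin r) : ℕ) = 1 := fun h => h4 (Fin.ext (by rw [h, ho]))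
            rw [if_neg h5, if_neg h6, Matrix.updateRow_ne hiz]
      rw [hM, det_two_row hpq]
    rw [Finset.sum_congr rfl (fun σ _ => h2 σ)] at h1
    rw [← h1]
    exact Fintype.sum_equiv (Equiv.inv (Equiv.Perm (Fin r)))
      (fun σ => u (σ z) (σ z) * m (σ o) (σ o) - u (σ z) (σ o) * m (σ o) (σ z))
      (fun σ => u (σ.symm z) (σ.symm z) * m (σ.symm o) (σ.symm o)
          - u (σ.symm z) (σ.symm o) * m (σ.symm o) (σ.symm z))
      (fun σ => by simp [Equiv.Perm.inv_def])
  -- off-diagonal entries vanish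
  have hoff : ∀ a b : Fin r, a ≠ b → m b a = 0 := by
    intro a b hab
    have h1 := key (Matrix.of fun p p' => if p = a ∧ p' = b then (1 : ℂ) else 0)
    have h2 : ∀ σ : Equiv.Perm (Fin r),
        ((Matrix.of fun p p' => if p = a ∧ p' = b then (1 : ℂ) else 0) (σ z) (σ z)
            * m (σ o) (σ o)
          - (Matrix.of fun p p' => if p = a ∧ p' = b then (1 : ℂ) else 0) (σ z) (σ o)
            * m (σ o) (σ z))
        = -(if σ z = a ∧ σ o = b then m b a else 0) := by
      intro σ
      simp only [Matrix.of_apply]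
      have hfirst : ¬ (σ z = a ∧ σ z = b) := fun hh => hab (hh.1.symm.trans hh.2)
      rw [if_neg hfirst]
      by_cases h : σ z = a ∧ σ o = b
      · rw [if_pos h, if_pos h, h.1, h.2]; ring
      · rw [if_neg h, if_neg h]; ring
    rw [Finset.sum_congr rfl (fun σ _ => h2 σ), Finset.sum_neg_distrib,
      neg_eq_zero, ← Finset.sum_filter, Finset.sum_const, nsmul_eq_mul] at h1
    obtain ⟨σ0, hσ0⟩ := perm_exists z o hzo a b hab
    have hne : (Finset.univ.filter
        (fun σ : Equiv.Perm (Fin r) => σ z = a ∧ σ o = b)).card ≠ 0 := by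
      rw [Finset.card_ne_zero, Finset.filter_nonempty_iff]
      exact ⟨σ0, Finset.mem_univ _, hσ0⟩
    rcases mul_eq_zero.mp h1 with h | h
    · exact absurd (Nat.cast_eq_zero.mp h) hne
    · exact h
  -- auxiliary: for each a, the sum of diagonal entries other than a vanishes
  have hdiag : ∀ a : Fin r, (∑ q : Fin r, m q q) - m a a = 0 := by
    intro a
    have h1 := key (Matrix.of fun p p' => if p = a ∧ p' = a then (1 : ℂ) else 0)
    have h2 : ∀ σ : Equiv.Perm (Fin r),
        ((Matrix.of fun p p' => if p = a ∧ p' = a then (1 : ℂ) else 0) (σ z) (σ z)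
            * m (σ o) (σ o)
          - (Matrix.of fun p p' => if p = a ∧ p' = a then (1 : ℂ) else 0) (σ z) (σ o)
            * m (σ o) (σ z))
        = (if σ z = a then m (σ o) (σ o) else 0) := by
      intro σ
      simp only [Matrix.of_apply]
      have hne : σ z ≠ σ o := fun h => hzo (σ.injective h)
      have hsecond : ¬ (σ z = a ∧ σ o = a) := fun hh => hne (hh.1.trans hh.2.symm)
      rw [if_neg hsecond]
      by_cases h : σ z = a
      · rw [if_pos ⟨h, h⟩, if_pos h]; ring
      · rw [if_neg (fun hh => h hh.1), if_neg h]; ring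
    rw [Finset.sum_congr rfl (fun σ _ => h2 σ), ← Finset.sum_filter] at h1
    rw [← Finset.sum_fiberwise_of_maps_to (g := fun σ : Equiv.Perm (Fin r) => σ o)
      (t := Finset.univ) (fun _ _ => Finset.mem_univ _)] at h1
    set N : Fin r → ℕ := fun q => (Finset.univ.filter
      (fun σ : Equiv.Perm (Fin r) => σ z = a ∧ σ o = q)).card with hN
    have h3 : ∀ q : Fin r,
        (∑ σ ∈ (Finset.univ.filter (fun σ : Equiv.Perm (Fin r) => σ z = a)).filter
          (fun σ => σ o = q), m (σ o) (σ o)) = (N q : ℂ) * m q q := by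
      intro q
      rw [Finset.filter_filter,
        Finset.sum_congr rfl (fun σ hσ => by
          rw [(Finset.mem_filter.mp hσ).2.2]),
        Finset.sum_const, nsmul_eq_mul, hN]
    rw [Finset.sum_congr rfl (fun q _ => h3 q)] at h1
    set b0 : Fin r := if a = z then o else z with hb0def
    have hb0 : b0 ≠ a := by
      rw [hb0def]
      split_ifs with h
      · rw [h]; exact Ne.symm hzo
      · exact fun hh => h hh.symm
    have hNa : N a = 0 := by
      rw [hN, Finset.card_eq_zero, Finset.filter_eq_empty_iff]
      rintro σ - ⟨hz1, ho1⟩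
      exact hzo (σ.injective (hz1.trans ho1.symm))
    have h4 : ∀ q : Fin r, (N q : ℂ) * m q q
        = (N b0 : ℂ) * (if q = a then 0 else m q q) := by
      intro q
      by_cases hq : q = a
      · rw [hq, hNa, if_pos rfl]; simp
      · simp only [hN]
        rw [if_neg hq, card_fiber_eq z o a q b0 hq hb0]
    rw [Finset.sum_congr rfl (fun q _ => h4 q), ← Finset.mul_sum] at h1
    have hNb0 : (N b0 : ℂ) ≠ 0 := by
      obtain ⟨σ0, hσ0⟩ := perm_exists z o hzo a b0 (Ne.symm hb0)
      rw [Nat.cast_ne_zero, hN, Finset.card_ne_zero, Finset.filter_nonempty_iff]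
      exact ⟨σ0, Finset.mem_univ _, hσ0⟩
    have h5 : (∑ q : Fin r, (if q = a then (0:ℂ) else m q q)) = 0 :=
      (mul_eq_zero.mp h1).resolve_left hNb0
    have h6 : (∑ q : Fin r, (if q = a then (0:ℂ) else m q q))
        = (∑ q : Fin r, m q q) - m a a := by
      rw [show (∑ q : Fin r, (if q = a then (0:ℂ) else m q q))
          = ∑ q : Fin r, (m q q - if q = a then m q q else 0) from
        Finset.sum_congr rfl (fun q _ => by split_ifs <;> ring),
        Finset.sum_sub_distrib, Finset.sum_ite_eq' Finset.univ a (fun q => m q q)]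
      simp
    rw [h6] at h5
    exact h5
  -- trace vanishes
  have htr : (∑ q : Fin r, m q q) = 0 := by
    have h1 : ∀ a : Fin r, m a a = ∑ q : Fin r, m q q := by
      intro a
      have := hdiag a
      linear_combination -this
    have h2 : (∑ q : Fin r, m q q) = (r : ℂ) * ∑ q : Fin r, m q q := by
      conv_lhs => rw [Finset.sum_congr rfl (fun a _ => h1 a)]
      rw [Finset.sum_const, nsmul_eq_mul, Finset.card_univ, Fintype.card_fin]
    have h3 : ((r : ℂ) - 1) * (∑ q : Fin r, m q q) = 0 := by linear_combination -h2
    rcases mul_eq_zero.mp h3 with h | h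
    · exfalso
      have : (r : ℂ) = 1 := by linear_combination h
      have : (r : ℕ) = 1 := Nat.cast_injective (by exact_mod_cast this)
      omega
    · exact h
  have hm0 : m = 0 := by
    ext b a
    by_cases hba : b = a
    · rw [hba]
      have := hdiag a
      rw [htr] at this
      simpa using this.symm
    · simpa using hoff a b (fun h => hba h.symm)
  rw [← hVm, hm0, Matrix.mul_zero]
end

section
/- Let n ≥ 1 and let ρ : M (space of Hermitian 2n×2n matrices, viewed as 2×2 blocks of n×n matrices x^{AA'i}_j) → H (Hermitian 2×2 matrices) be a real-linear map such that (i) ρ(0) = 0; (ii) ρ is Poincaré invariant: ρ((l ⊗ I_n) x (l ⊗ I_n)* + b ⊗ I_n) = l ρ(x) l* + b for all l ∈ SL(2,ℂ), Hermitian 2×2 b, and x ∈ M; (iii) ρ is causal: if x ∈ M is positive semi-definite then ρ(x) is positive semi-definite (as a 2×2 matrix). Then there exists an n×n density matrix σ (Hermitian, positive semi-definite, trace 1) such that ρ(x)^{AA'} = Σ_{i,j} σ^j_i x^{AA'i}_j, i.e. ρ is the partial trace against a density matrix. -/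
open Matrix ComplexOrder

open Kronecker

namespace St18
open Kronecker

variable {n : ℕ}

noncomputable def hpart (z : Matrix (Fin 2 × Fin n) (Fin 2 × Fin n) ℂ) :
    selfAdjoint (Matrix (Fin 2 × Fin n) (Fin 2 × Fin n) ℂ) :=
  ⟨(2⁻¹ : ℂ) • (z + zᴴ), by
    simp only [selfAdjoint.mem_iff, _root_.IsSelfAdjoint, star_smul, star_add]
    simp [Matrix.star_eq_conjTranspose, add_comm, Complex.ext_iff]⟩

noncomputable def kpart (z : Matrix (Fin 2 × Fin n) (Fin 2 × Fin n) ℂ) :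
    selfAdjoint (Matrix (Fin 2 × Fin n) (Fin 2 × Fin n) ℂ) :=
  ⟨((2⁻¹ : ℂ) * Complex.I) • (zᴴ - z), by
    simp only [selfAdjoint.mem_iff, _root_.IsSelfAdjoint, star_smul, star_sub]
    simp only [Matrix.star_eq_conjTranspose, conjTranspose_conjTranspose]
    rw [show star ((2⁻¹ : ℂ) * Complex.I) = -((2⁻¹ : ℂ) * Complex.I) by
      simp [Complex.ext_iff]]
    rw [neg_smul, ← smul_neg, neg_sub]⟩

theorem hpart_add_I_kpart (z : Matrix (Fin 2 × Fin n) (Fin 2 × Fin n) ℂ) :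
    (hpart z : Matrix (Fin 2 × Fin n) (Fin 2 × Fin n) ℂ)
      + Complex.I • (kpart z : Matrix (Fin 2 × Fin n) (Fin 2 × Fin n) ℂ) = z := by
  simp only [hpart, kpart, smul_smul, smul_add, smul_sub]
  rw [show Complex.I * (2⁻¹ * Complex.I) = -2⁻¹ by
    rw [mul_left_comm, Complex.I_mul_I]; ring]
  module


theorem hpart_coe (x : selfAdjoint (Matrix (Fin 2 × Fin n) (Fin 2 × Fin n) ℂ)) :
    hpart (x : Matrix (Fin 2 × Fin n) (Fin 2 × Fin n) ℂ) = x := by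
  have hx : (x : Matrix (Fin 2 × Fin n) (Fin 2 × Fin n) ℂ)ᴴ = x := x.2
  ext1
  simp only [hpart, hx]
  rw [← two_smul ℂ]
  rw [smul_smul]
  norm_num

theorem kpart_coe (x : selfAdjoint (Matrix (Fin 2 × Fin n) (Fin 2 × Fin n) ℂ)) :
    kpart (x : Matrix (Fin 2 × Fin n) (Fin 2 × Fin n) ℂ) = 0 := by
  have hx : (x : Matrix (Fin 2 × Fin n) (Fin 2 × Fin n) ℂ)ᴴ = x := x.2
  ext1
  simp [kpart, hx]

variable (ρ : ↥(selfAdjoint (Matrix (Fin 2 × Fin n) (Fin 2 × Fin n) ℂ)) →ₗ[ℝ]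
         ↥(selfAdjoint (Matrix (Fin 2) (Fin 2) ℂ)))

noncomputable def rhoc (z : Matrix (Fin 2 × Fin n) (Fin 2 × Fin n) ℂ) :
    Matrix (Fin 2) (Fin 2) ℂ :=
  (ρ (hpart z) : Matrix (Fin 2) (Fin 2) ℂ) + Complex.I • (ρ (kpart z) : Matrix (Fin 2) (Fin 2) ℂ)

theorem rhoc_coe (x : selfAdjoint (Matrix (Fin 2 × Fin n) (Fin 2 × Fin n) ℂ)) :
    rhoc ρ (x : Matrix (Fin 2 × Fin n) (Fin 2 × Fin n) ℂ) = ρ x := by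
  simp [rhoc, hpart_coe, kpart_coe]

theorem rhoc_add (z w : Matrix (Fin 2 × Fin n) (Fin 2 × Fin n) ℂ) :
    rhoc ρ (z + w) = rhoc ρ z + rhoc ρ w := by
  have h1 : hpart (z + w) = hpart z + hpart (n := n) w := by
    ext1; simp [hpart, conjTranspose_add, smul_add]; abel
  have h2 : kpart (z + w) = kpart z + kpart (n := n) w := by
    ext1; simp [kpart, conjTranspose_add, smul_add, smul_sub]; abel
  simp only [rhoc, h1, h2, map_add, AddSubgroup.coe_add, smul_add]
  abel

theorem rhoc_real_smul (r : ℝ) (z : Matrix (Fin 2 × Fin n) (Fin 2 × Fin n) ℂ) :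
    rhoc ρ (r • z) = r • rhoc ρ z := by
  have h1 : hpart (r • z) = r • hpart (n := n) z := by
    ext1; simp [hpart, conjTranspose_smul, smul_add, smul_comm r]
  have h2 : kpart (r • z) = r • kpart (n := n) z := by
    ext1; simp [kpart, conjTranspose_smul, smul_sub, smul_comm r]
  rw [rhoc, rhoc, h1, h2, LinearMap.map_smul, LinearMap.map_smul]
  rw [selfAdjoint.val_smul, selfAdjoint.val_smul, smul_add, smul_comm r]

theorem rhoc_I_smul (z : Matrix (Fin 2 × Fin n) (Fin 2 × Fin n) ℂ) :
    rhoc ρ (Complex.I • z) = Complex.I • rhoc ρ z := by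
  have h1 : hpart (Complex.I • z) = -kpart (n := n) z := by
    ext1
    simp only [hpart, kpart, conjTranspose_smul, Complex.star_def, Complex.conj_I,
      NegMemClass.coe_neg]
    match_scalars <;> simp [Complex.ext_iff]
  have h2 : kpart (Complex.I • z) = hpart (n := n) z := by
    ext1
    simp only [hpart, kpart, conjTranspose_smul, Complex.star_def, Complex.conj_I]
    match_scalars <;> simp [Complex.ext_iff]
  rw [rhoc, rhoc, h1, h2, map_neg, NegMemClass.coe_neg, smul_add]
  match_scalars <;> simp [Complex.ext_iff]


theorem rhoc_smul (c : ℂ) (z : Matrix (Fin 2 × Fin n) (Fin 2 × Fin n) ℂ) :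
    rhoc ρ (c • z) = c • rhoc ρ z := by
  have hz : c • z = (c.re : ℝ) • z + (c.im : ℝ) • (Complex.I • z) := by
    match_scalars
    simp [Complex.ext_iff]
  rw [hz, rhoc_add, rhoc_real_smul, rhoc_real_smul, rhoc_I_smul]
  match_scalars
  simp [Complex.ext_iff]

noncomputable def rhoC : Matrix (Fin 2 × Fin n) (Fin 2 × Fin n) ℂ →ₗ[ℂ]
    Matrix (Fin 2) (Fin 2) ℂ where
  toFun := rhoc ρ
  map_add' := rhoc_add ρ
  map_smul' := rhoc_smul ρ

theorem rhoC_coe (x : selfAdjoint (Matrix (Fin 2 × Fin n) (Fin 2 × Fin n) ℂ)) :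
    rhoC ρ (x : Matrix (Fin 2 × Fin n) (Fin 2 × Fin n) ℂ) = ρ x := rhoc_coe ρ x


theorem kron_conjT (l : Matrix (Fin 2) (Fin 2) ℂ) :
    (l ⊗ₖ (1 : Matrix (Fin n) (Fin n) ℂ))ᴴ = lᴴ ⊗ₖ (1 : Matrix (Fin n) (Fin n) ℂ) := by
  ext ⟨A, a⟩ ⟨B, b⟩
  simp only [conjTranspose_apply, kroneckerMap_apply, Matrix.one_apply]
  split_ifs with h1 h2 h2 <;> simp_all [eq_comm]

theorem conj_herm (l : Matrix (Fin 2) (Fin 2) ℂ)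
    (x : selfAdjoint (Matrix (Fin 2 × Fin n) (Fin 2 × Fin n) ℂ)) :
    (l ⊗ₖ (1 : Matrix (Fin n) (Fin n) ℂ) * (x : Matrix (Fin 2 × Fin n) (Fin 2 × Fin n) ℂ)
      * (l ⊗ₖ (1 : Matrix (Fin n) (Fin n) ℂ))ᴴ)
      ∈ selfAdjoint (Matrix (Fin 2 × Fin n) (Fin 2 × Fin n) ℂ) := by
  have hx : (x : Matrix (Fin 2 × Fin n) (Fin 2 × Fin n) ℂ)ᴴ = x := x.2
  simp only [selfAdjoint.mem_iff, _root_.IsSelfAdjoint, Matrix.star_eq_conjTranspose,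
    conjTranspose_mul, conjTranspose_conjTranspose, hx, mul_assoc]

theorem rho_conj
    (hinv : ∀ l : Matrix (Fin 2) (Fin 2) ℂ, l.det = 1 →
      ∀ b : Matrix (Fin 2) (Fin 2) ℂ, b.IsHermitian →
      ∀ x y : ↥(selfAdjoint (Matrix (Fin 2 × Fin n) (Fin 2 × Fin n) ℂ)),
        (y : Matrix (Fin 2 × Fin n) (Fin 2 × Fin n) ℂ)
            = Matrix.kroneckerMap (· * ·) l (1 : Matrix (Fin n) (Fin n) ℂ)
                * (x : Matrix (Fin 2 × Fin n) (Fin 2 × Fin n) ℂ)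
                * (Matrix.kroneckerMap (· * ·) l (1 : Matrix (Fin n) (Fin n) ℂ))ᴴ
              + Matrix.kroneckerMap (· * ·) b (1 : Matrix (Fin n) (Fin n) ℂ) →
        (ρ y : Matrix (Fin 2) (Fin 2) ℂ) = l * (ρ x : Matrix (Fin 2) (Fin 2) ℂ) * lᴴ + b)
    (l : Matrix (Fin 2) (Fin 2) ℂ) (hl : l.det = 1)
    (x : selfAdjoint (Matrix (Fin 2 × Fin n) (Fin 2 × Fin n) ℂ)) :
    (ρ ⟨l ⊗ₖ (1 : Matrix (Fin n) (Fin n) ℂ) * (x : Matrix (Fin 2 × Fin n) (Fin 2 × Fin n) ℂ)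
        * (l ⊗ₖ (1 : Matrix (Fin n) (Fin n) ℂ))ᴴ, conj_herm l x⟩ : Matrix (Fin 2) (Fin 2) ℂ)
      = l * (ρ x : Matrix (Fin 2) (Fin 2) ℂ) * lᴴ := by
  have h0 : Matrix.kroneckerMap (· * ·) (0 : Matrix (Fin 2) (Fin 2) ℂ)
      (1 : Matrix (Fin n) (Fin n) ℂ) = 0 := by
    ext ⟨A, a⟩ ⟨B, b⟩; simp [kroneckerMap_apply]
  have := hinv l hl 0 isHermitian_zero x
    ⟨l ⊗ₖ (1 : Matrix (Fin n) (Fin n) ℂ) * (x : Matrix (Fin 2 × Fin n) (Fin 2 × Fin n) ℂ)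
        * (l ⊗ₖ (1 : Matrix (Fin n) (Fin n) ℂ))ᴴ, conj_herm l x⟩
    (by rw [h0, add_zero])
  rw [this, add_zero]

theorem rhoc_conj
    (hinv : ∀ l : Matrix (Fin 2) (Fin 2) ℂ, l.det = 1 →
      ∀ b : Matrix (Fin 2) (Fin 2) ℂ, b.IsHermitian →
      ∀ x y : ↥(selfAdjoint (Matrix (Fin 2 × Fin n) (Fin 2 × Fin n) ℂ)),
        (y : Matrix (Fin 2 × Fin n) (Fin 2 × Fin n) ℂ)
            = Matrix.kroneckerMap (· * ·) l (1 : Matrix (Fin n) (Fin n) ℂ)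
                * (x : Matrix (Fin 2 × Fin n) (Fin 2 × Fin n) ℂ)
                * (Matrix.kroneckerMap (· * ·) l (1 : Matrix (Fin n) (Fin n) ℂ))ᴴ
              + Matrix.kroneckerMap (· * ·) b (1 : Matrix (Fin n) (Fin n) ℂ) →
        (ρ y : Matrix (Fin 2) (Fin 2) ℂ) = l * (ρ x : Matrix (Fin 2) (Fin 2) ℂ) * lᴴ + b)
    (l : Matrix (Fin 2) (Fin 2) ℂ) (hl : l.det = 1)
    (z : Matrix (Fin 2 × Fin n) (Fin 2 × Fin n) ℂ) :
    rhoc ρ (l ⊗ₖ (1 : Matrix (Fin n) (Fin n) ℂ) * z * (l ⊗ₖ (1 : Matrix (Fin n) (Fin n) ℂ))ᴴ)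
      = l * rhoc ρ z * lᴴ := by
  set L := l ⊗ₖ (1 : Matrix (Fin n) (Fin n) ℂ) with hL
  have hconj : (L * z * Lᴴ)ᴴ = L * zᴴ * Lᴴ := by
    simp [conjTranspose_mul, conjTranspose_conjTranspose, mul_assoc]
  have h1 : hpart (L * z * Lᴴ)
      = ⟨L * (hpart z : Matrix (Fin 2 × Fin n) (Fin 2 × Fin n) ℂ) * Lᴴ,
          conj_herm l (hpart z)⟩ := by
    ext1
    simp only [hpart, hconj]
    rw [Matrix.mul_smul, Matrix.smul_mul, mul_add, add_mul]
  have h2 : kpart (L * z * Lᴴ)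
      = ⟨L * (kpart z : Matrix (Fin 2 × Fin n) (Fin 2 × Fin n) ℂ) * Lᴴ,
          conj_herm l (kpart z)⟩ := by
    ext1
    simp only [kpart, hconj]
    rw [Matrix.mul_smul, Matrix.smul_mul, mul_sub, sub_mul]
  rw [rhoc, rhoc, h1, h2, rho_conj ρ hinv l hl, rho_conj ρ hinv l hl]
  rw [mul_add, add_mul, Matrix.mul_smul, Matrix.smul_mul]


private noncomputable def dvec : Fin 2 → ℂ := ![1 + Complex.I, (1 - Complex.I) / 2]

private theorem dvec_det : (Matrix.diagonal dvec).det = 1 := by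
  rw [Matrix.det_diagonal, Fin.prod_univ_two]
  simp only [dvec, Matrix.cons_val_zero, Matrix.cons_val_one, Matrix.head_cons]
  simp [Complex.ext_iff]
  norm_num

private theorem mu_ne : ∀ A A' B B' : Fin 2, ¬(B = A ∧ B' = A') →
    dvec B * star (dvec B') ≠ dvec A * star (dvec A') := by
  intro A A' B B' h
  fin_cases A <;> fin_cases A' <;> fin_cases B <;> fin_cases B' <;>
    simp_all [dvec, Complex.ext_iff] <;> norm_num

theorem schur (T : Matrix (Fin 2) (Fin 2) ℂ →ₗ[ℂ] Matrix (Fin 2) (Fin 2) ℂ)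
    (hT : ∀ l : Matrix (Fin 2) (Fin 2) ℂ, l.det = 1 →
      ∀ u, T (l * u * lᴴ) = l * T u * lᴴ) (u : Matrix (Fin 2) (Fin 2) ℂ) :
    T u = (T (Matrix.single 1 1 1) 1 1) • u := by
  set c : ℂ := T (Matrix.single 1 1 1) 1 1 with hc
  have hdiagconj : ∀ (M : Matrix (Fin 2) (Fin 2) ℂ) (A A' : Fin 2),
      (Matrix.diagonal dvec * M * (Matrix.diagonal dvec)ᴴ) A A'
        = dvec A * M A A' * star (dvec A') := by
    intro M A A'
    rw [diagonal_conjTranspose, mul_diagonal, diagonal_mul]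
    simp
  have hstd : ∀ B B' : Fin 2,
      Matrix.diagonal dvec * Matrix.single B B' 1 * (Matrix.diagonal dvec)ᴴ
        = (dvec B * star (dvec B')) • Matrix.single B B' 1 := by
    intro B B'
    ext A A'
    rw [hdiagconj, Matrix.smul_apply, smul_eq_mul]
    by_cases h : B = A ∧ B' = A'
    · obtain ⟨rfl, rfl⟩ := h
      simp [mul_comm]
    · rw [Matrix.single_apply_of_ne _ _ _ _ _ h]
      ring
  have step1 : ∀ B B' A A' : Fin 2, ¬(B = A ∧ B' = A') →
      T (Matrix.single B B' 1) A A' = 0 := by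
    intro B B' A A' h
    have h1 := hT (Matrix.diagonal dvec) dvec_det (Matrix.single B B' 1)
    rw [hstd, LinearMap.map_smul] at h1
    have h2 := congrFun (congrFun h1 A) A'
    rw [hdiagconj, Matrix.smul_apply, smul_eq_mul] at h2
    have hne := mu_ne A A' B B' h
    have h3 : (dvec B * star (dvec B') - dvec A * star (dvec A'))
        * T (Matrix.single B B' 1) A A' = 0 := by
      rw [sub_mul, h2]; ring
    rcases mul_eq_zero.mp h3 with h4 | h4
    · exact absurd (sub_eq_zero.mp h4) hne
    · exact h4
  have l2det : (!![1, 1; 0, 1] : Matrix (Fin 2) (Fin 2) ℂ).det = 1 := by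
    rw [Matrix.det_fin_two_of]; norm_num
  have h11 : (!![1, 1; 0, 1] : Matrix (Fin 2) (Fin 2) ℂ) * Matrix.single 1 1 1
        * (!![1, 1; 0, 1] : Matrix (Fin 2) (Fin 2) ℂ)ᴴ
      = Matrix.single 0 0 1 + Matrix.single 0 1 1 + Matrix.single 1 0 1
        + Matrix.single 1 1 1 := by
    ext A A'
    fin_cases A <;> fin_cases A' <;>
      simp [Matrix.mul_apply, Fin.sum_univ_two, Matrix.single, conjTranspose_apply,
        Matrix.vecHead, Matrix.vecTail]
  have hT11 : T (Matrix.single 1 1 1) = c • Matrix.single 1 1 1 := by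
    ext B B'
    rw [Matrix.smul_apply, smul_eq_mul]
    by_cases h : (1 : Fin 2) = B ∧ (1 : Fin 2) = B'
    · obtain ⟨rfl, rfl⟩ := h
      simp [hc]
    · rw [step1 _ _ _ _ h, Matrix.single_apply_of_ne _ _ _ _ _ h, mul_zero]
  have step2 : ∀ A A' : Fin 2, T (Matrix.single A A' 1) A A' = c := by
    intro A A'
    have h1 := hT !![1, 1; 0, 1] l2det (Matrix.single 1 1 1)
    rw [h11, hT11, Matrix.mul_smul, Matrix.smul_mul, h11, map_add, map_add, map_add] at h1
    have h2 := congrFun (congrFun h1 A) A'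
    fin_cases A <;> fin_cases A' <;>
      simpa [step1, Matrix.add_apply] using h2
  have hbasis : ∀ B B' : Fin 2, T (Matrix.single B B' 1) = c • Matrix.single B B' 1 := by
    intro B B'
    ext A A'
    rw [Matrix.smul_apply, smul_eq_mul]
    by_cases h : B = A ∧ B' = A'
    · obtain ⟨rfl, rfl⟩ := h
      rw [step2, Matrix.single_apply_same, mul_one]
    · rw [step1 _ _ _ _ h, Matrix.single_apply_of_ne _ _ _ _ _ h, mul_zero]
  have hsmul : ∀ B B' : Fin 2, T (Matrix.single B B' (u B B'))
      = c • Matrix.single B B' (u B B') := by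
    intro B B'
    have e : Matrix.single B B' (u B B') = (u B B') • Matrix.single B B' (1 : ℂ) := by
      rw [smul_single, smul_eq_mul, mul_one]
    rw [e, LinearMap.map_smul, hbasis, smul_comm]
  conv_lhs => rw [matrix_eq_sum_single u]
  rw [map_sum]
  simp_rw [map_sum, hsmul, ← Finset.smul_sum]
  rw [← matrix_eq_sum_single]


theorem conj_kron (l u : Matrix (Fin 2) (Fin 2) ℂ) (a : Matrix (Fin n) (Fin n) ℂ) :
    l ⊗ₖ (1 : Matrix (Fin n) (Fin n) ℂ) * (u ⊗ₖ a) * (l ⊗ₖ (1 : Matrix (Fin n) (Fin n) ℂ))ᴴ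
      = (l * u * lᴴ) ⊗ₖ a := by
  rw [kron_conjT, ← mul_kronecker_mul, ← mul_kronecker_mul, one_mul, mul_one]

noncomputable def Ta (a : Matrix (Fin n) (Fin n) ℂ) :
    Matrix (Fin 2) (Fin 2) ℂ →ₗ[ℂ] Matrix (Fin 2) (Fin 2) ℂ where
  toFun u := rhoC ρ (u ⊗ₖ a)
  map_add' u v := by
    show rhoC ρ ((u + v) ⊗ₖ a) = rhoC ρ (u ⊗ₖ a) + rhoC ρ (v ⊗ₖ a)
    rw [add_kronecker, map_add]
  map_smul' c u := by
    show rhoC ρ ((c • u) ⊗ₖ a) = (RingHom.id ℂ) c • rhoC ρ (u ⊗ₖ a)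
    rw [smul_kronecker, LinearMap.map_smul, RingHom.id_apply]

theorem key
    (hinv : ∀ l : Matrix (Fin 2) (Fin 2) ℂ, l.det = 1 →
      ∀ b : Matrix (Fin 2) (Fin 2) ℂ, b.IsHermitian →
      ∀ x y : ↥(selfAdjoint (Matrix (Fin 2 × Fin n) (Fin 2 × Fin n) ℂ)),
        (y : Matrix (Fin 2 × Fin n) (Fin 2 × Fin n) ℂ)
            = Matrix.kroneckerMap (· * ·) l (1 : Matrix (Fin n) (Fin n) ℂ)
                * (x : Matrix (Fin 2 × Fin n) (Fin 2 × Fin n) ℂ)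
                * (Matrix.kroneckerMap (· * ·) l (1 : Matrix (Fin n) (Fin n) ℂ))ᴴ
              + Matrix.kroneckerMap (· * ·) b (1 : Matrix (Fin n) (Fin n) ℂ) →
        (ρ y : Matrix (Fin 2) (Fin 2) ℂ) = l * (ρ x : Matrix (Fin 2) (Fin 2) ℂ) * lᴴ + b)
    (a : Matrix (Fin n) (Fin n) ℂ) (u : Matrix (Fin 2) (Fin 2) ℂ) :
    rhoC ρ (u ⊗ₖ a) = (rhoC ρ (Matrix.single 1 1 1 ⊗ₖ a) 1 1) • u := by
  have := schur (Ta ρ a) (fun l hl v => by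
    show rhoC ρ ((l * v * lᴴ) ⊗ₖ a) = l * rhoC ρ (v ⊗ₖ a) * lᴴ
    rw [← conj_kron]
    exact rhoc_conj ρ hinv l hl _) u
  exact this


theorem kron_conjT' (u : Matrix (Fin 2) (Fin 2) ℂ) (a : Matrix (Fin n) (Fin n) ℂ) :
    (u ⊗ₖ a)ᴴ = uᴴ ⊗ₖ aᴴ := by
  ext ⟨A, i⟩ ⟨B, j⟩
  simp only [conjTranspose_apply, kroneckerMap_apply, star_mul']

theorem kron_one_herm (b : Matrix (Fin 2) (Fin 2) ℂ) (hb : b.IsHermitian) :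
    b ⊗ₖ (1 : Matrix (Fin n) (Fin n) ℂ)
      ∈ selfAdjoint (Matrix (Fin 2 × Fin n) (Fin 2 × Fin n) ℂ) := by
  simp only [selfAdjoint.mem_iff, _root_.IsSelfAdjoint, Matrix.star_eq_conjTranspose,
    kron_conjT', hb.eq, conjTranspose_one]

theorem rho_transl
    (hinv : ∀ l : Matrix (Fin 2) (Fin 2) ℂ, l.det = 1 →
      ∀ b : Matrix (Fin 2) (Fin 2) ℂ, b.IsHermitian →
      ∀ x y : ↥(selfAdjoint (Matrix (Fin 2 × Fin n) (Fin 2 × Fin n) ℂ)),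
        (y : Matrix (Fin 2 × Fin n) (Fin 2 × Fin n) ℂ)
            = Matrix.kroneckerMap (· * ·) l (1 : Matrix (Fin n) (Fin n) ℂ)
                * (x : Matrix (Fin 2 × Fin n) (Fin 2 × Fin n) ℂ)
                * (Matrix.kroneckerMap (· * ·) l (1 : Matrix (Fin n) (Fin n) ℂ))ᴴ
              + Matrix.kroneckerMap (· * ·) b (1 : Matrix (Fin n) (Fin n) ℂ) →
        (ρ y : Matrix (Fin 2) (Fin 2) ℂ) = l * (ρ x : Matrix (Fin 2) (Fin 2) ℂ) * lᴴ + b)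
    (b : Matrix (Fin 2) (Fin 2) ℂ) (hb : b.IsHermitian) :
    rhoC ρ (b ⊗ₖ (1 : Matrix (Fin n) (Fin n) ℂ)) = b := by
  have h := hinv 1 det_one b hb 0 ⟨b ⊗ₖ (1 : Matrix (Fin n) (Fin n) ℂ), kron_one_herm b hb⟩
    (by rw [ZeroMemClass.coe_zero, mul_zero, zero_mul, zero_add])
  have h2 := rhoC_coe ρ ⟨b ⊗ₖ (1 : Matrix (Fin n) (Fin n) ℂ), kron_one_herm b hb⟩
  rw [h2, h, map_zero]
  simp

theorem std_kron (B B' : Fin 2) (i j : Fin n) :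
    Matrix.single ((B, i) : Fin 2 × Fin n) (B', j) (1 : ℂ)
      = Matrix.single B B' 1 ⊗ₖ Matrix.single i j 1 := by
  ext ⟨A, a⟩ ⟨A', a'⟩
  simp only [Matrix.single, Matrix.of_apply, kroneckerMap_apply, Prod.mk.injEq]
  by_cases h1 : B = A <;> by_cases h2 : B' = A' <;> by_cases h3 : i = a <;>
    by_cases h4 : j = a' <;> simp [h1, h2, h3, h4]

theorem rhoc_conjT (z : Matrix (Fin 2 × Fin n) (Fin 2 × Fin n) ℂ) :
    rhoc ρ zᴴ = (rhoc ρ z)ᴴ := by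
  have h1 : hpart zᴴ = hpart z := by
    ext1; simp only [hpart, conjTranspose_conjTranspose]; rw [add_comm]
  have h2 : kpart zᴴ = -kpart z := by
    ext1
    simp only [kpart, conjTranspose_conjTranspose, NegMemClass.coe_neg]
    rw [← smul_neg, neg_sub]
  have hh : ((ρ (hpart z) : Matrix (Fin 2) (Fin 2) ℂ))ᴴ = ρ (hpart z) := (ρ (hpart z)).2
  have hk : ((ρ (kpart z) : Matrix (Fin 2) (Fin 2) ℂ))ᴴ = ρ (kpart z) := (ρ (kpart z)).2
  rw [rhoc, rhoc, h1, h2, map_neg, NegMemClass.coe_neg, conjTranspose_add,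
    conjTranspose_smul, hh, hk]
  simp

noncomputable def lam : Matrix (Fin n) (Fin n) ℂ →ₗ[ℂ] ℂ where
  toFun a := rhoC ρ (Matrix.single 1 1 1 ⊗ₖ a) 1 1
  map_add' a b := by
    show rhoC ρ (Matrix.single 1 1 1 ⊗ₖ (a + b)) 1 1
      = rhoC ρ (Matrix.single 1 1 1 ⊗ₖ a) 1 1 + rhoC ρ (Matrix.single 1 1 1 ⊗ₖ b) 1 1
    rw [kronecker_add, map_add, Matrix.add_apply]
  map_smul' c a := by
    show rhoC ρ (Matrix.single 1 1 1 ⊗ₖ (c • a)) 1 1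
      = (RingHom.id ℂ) c • rhoC ρ (Matrix.single 1 1 1 ⊗ₖ a) 1 1
    rw [kronecker_smul, LinearMap.map_smul, Matrix.smul_apply, RingHom.id_apply]


theorem stdBasis_conjT {m : Type*} [DecidableEq m] (B B' : m) :
    (Matrix.single B B' (1 : ℂ))ᴴ = Matrix.single B' B 1 := by
  ext A A'
  simp only [conjTranspose_apply, Matrix.single, Matrix.of_apply]
  split_ifs with h1 h2 h2 <;> simp_all [and_comm] <;> tauto

theorem stdBasis_herm : (Matrix.single 1 1 (1 : ℂ) : Matrix (Fin 2) (Fin 2) ℂ).IsHermitian :=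
  stdBasis_conjT 1 1

theorem sum_diag_std : ∑ p : Fin n, Matrix.single p p (1 : ℂ) = (1 : Matrix (Fin n) (Fin n) ℂ) := by
  ext i j
  rw [Matrix.sum_apply]
  by_cases h : i = j
  · subst h
    rw [Matrix.one_apply_eq]
    rw [Finset.sum_eq_single i]
    · simp
    · intro b _ hb
      exact Matrix.single_apply_of_ne _ _ _ _ _ (by tauto)
    · simp
  · rw [Matrix.one_apply_ne h]
    apply Finset.sum_eq_zero
    intro p _
    exact Matrix.single_apply_of_ne _ _ _ _ _ (by rintro ⟨rfl, rfl⟩; exact h rfl)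

theorem rhoC_conjT (z : Matrix (Fin 2 × Fin n) (Fin 2 × Fin n) ℂ) :
    rhoC ρ zᴴ = (rhoC ρ z)ᴴ := rhoc_conjT ρ z

theorem main
    (hinv : ∀ l : Matrix (Fin 2) (Fin 2) ℂ, l.det = 1 →
      ∀ b : Matrix (Fin 2) (Fin 2) ℂ, b.IsHermitian →
      ∀ x y : ↥(selfAdjoint (Matrix (Fin 2 × Fin n) (Fin 2 × Fin n) ℂ)),
        (y : Matrix (Fin 2 × Fin n) (Fin 2 × Fin n) ℂ)
            = Matrix.kroneckerMap (· * ·) l (1 : Matrix (Fin n) (Fin n) ℂ)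
                * (x : Matrix (Fin 2 × Fin n) (Fin 2 × Fin n) ℂ)
                * (Matrix.kroneckerMap (· * ·) l (1 : Matrix (Fin n) (Fin n) ℂ))ᴴ
              + Matrix.kroneckerMap (· * ·) b (1 : Matrix (Fin n) (Fin n) ℂ) →
        (ρ y : Matrix (Fin 2) (Fin 2) ℂ) = l * (ρ x : Matrix (Fin 2) (Fin 2) ℂ) * lᴴ + b)
    (x : selfAdjoint (Matrix (Fin 2 × Fin n) (Fin 2 × Fin n) ℂ)) (A A' : Fin 2) :
    (ρ x : Matrix (Fin 2) (Fin 2) ℂ) A A'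
      = ∑ i : Fin n, ∑ j : Fin n, lam ρ (Matrix.single i j 1)
          * (x : Matrix (Fin 2 × Fin n) (Fin 2 × Fin n) ℂ) (A, i) (A', j) := by
  have hterm : ∀ (B B' : Fin 2) (i j : Fin n) (c : ℂ),
      rhoC ρ (Matrix.single ((B, i) : Fin 2 × Fin n) (B', j) c) A A'
        = c * (lam ρ (Matrix.single i j 1) * Matrix.single B B' (1 : ℂ) A A') := by
    intro B B' i j c
    have e1 : Matrix.single ((B, i) : Fin 2 × Fin n) (B', j) c
        = c • (Matrix.single B B' 1 ⊗ₖ Matrix.single i j 1) := by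
      rw [← std_kron, smul_single, smul_eq_mul, mul_one]
    rw [e1, LinearMap.map_smul, Matrix.smul_apply, smul_eq_mul, key ρ hinv,
      Matrix.smul_apply, smul_eq_mul]
    rfl
  have h0 : (ρ x : Matrix (Fin 2) (Fin 2) ℂ) A A'
      = rhoC ρ (x : Matrix (Fin 2 × Fin n) (Fin 2 × Fin n) ℂ) A A' := by rw [rhoC_coe]
  rw [h0]
  conv_lhs => rw [matrix_eq_sum_single (x : Matrix (Fin 2 × Fin n) (Fin 2 × Fin n) ℂ)]
  simp only [map_sum, Matrix.sum_apply]
  simp only [Fintype.sum_prod_type]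
  simp only [hterm]
  fin_cases A <;> fin_cases A' <;>
    · simp [Fin.sum_univ_two, Matrix.single]
      exact Finset.sum_congr rfl fun i _ => Finset.sum_congr rfl fun j _ => by ring


theorem lam_expand (a : Matrix (Fin n) (Fin n) ℂ) :
    lam ρ a = ∑ i : Fin n, ∑ j : Fin n, a i j * lam ρ (Matrix.single i j 1) := by
  have e : ∀ i j : Fin n, Matrix.single i j (a i j) = a i j • Matrix.single i j (1 : ℂ) := by
    intro i j; rw [smul_single, smul_eq_mul, mul_one]
  conv_lhs => rw [matrix_eq_sum_single a]
  rw [map_sum]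
  simp_rw [map_sum, e, LinearMap.map_smul, smul_eq_mul]

theorem lam_one
    (hinv : ∀ l : Matrix (Fin 2) (Fin 2) ℂ, l.det = 1 →
      ∀ b : Matrix (Fin 2) (Fin 2) ℂ, b.IsHermitian →
      ∀ x y : ↥(selfAdjoint (Matrix (Fin 2 × Fin n) (Fin 2 × Fin n) ℂ)),
        (y : Matrix (Fin 2 × Fin n) (Fin 2 × Fin n) ℂ)
            = Matrix.kroneckerMap (· * ·) l (1 : Matrix (Fin n) (Fin n) ℂ)
                * (x : Matrix (Fin 2 × Fin n) (Fin 2 × Fin n) ℂ)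
                * (Matrix.kroneckerMap (· * ·) l (1 : Matrix (Fin n) (Fin n) ℂ))ᴴ
              + Matrix.kroneckerMap (· * ·) b (1 : Matrix (Fin n) (Fin n) ℂ) →
        (ρ y : Matrix (Fin 2) (Fin 2) ℂ) = l * (ρ x : Matrix (Fin 2) (Fin 2) ℂ) * lᴴ + b) :
    lam ρ (1 : Matrix (Fin n) (Fin n) ℂ) = 1 := by
  show rhoC ρ (Matrix.single 1 1 1 ⊗ₖ (1 : Matrix (Fin n) (Fin n) ℂ)) 1 1 = 1
  rw [rho_transl ρ hinv _ stdBasis_herm]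
  exact Matrix.single_apply_same 1 1 1


theorem lam_nonneg
    (hinv : ∀ l : Matrix (Fin 2) (Fin 2) ℂ, l.det = 1 →
      ∀ b : Matrix (Fin 2) (Fin 2) ℂ, b.IsHermitian →
      ∀ x y : ↥(selfAdjoint (Matrix (Fin 2 × Fin n) (Fin 2 × Fin n) ℂ)),
        (y : Matrix (Fin 2 × Fin n) (Fin 2 × Fin n) ℂ)
            = Matrix.kroneckerMap (· * ·) l (1 : Matrix (Fin n) (Fin n) ℂ)
                * (x : Matrix (Fin 2 × Fin n) (Fin 2 × Fin n) ℂ)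
                * (Matrix.kroneckerMap (· * ·) l (1 : Matrix (Fin n) (Fin n) ℂ))ᴴ
              + Matrix.kroneckerMap (· * ·) b (1 : Matrix (Fin n) (Fin n) ℂ) →
        (ρ y : Matrix (Fin 2) (Fin 2) ℂ) = l * (ρ x : Matrix (Fin 2) (Fin 2) ℂ) * lᴴ + b)
    (hcausal : ∀ x : ↥(selfAdjoint (Matrix (Fin 2 × Fin n) (Fin 2 × Fin n) ℂ)),
      (x : Matrix (Fin 2 × Fin n) (Fin 2 × Fin n) ℂ).PosSemidef →
      (ρ x : Matrix (Fin 2) (Fin 2) ℂ).PosSemidef)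
    (v : Fin n → ℂ) :
    0 ≤ lam ρ (Matrix.of fun i j => v i * star (v j)) := by
  set a : Matrix (Fin n) (Fin n) ℂ := Matrix.of fun i j => v i * star (v j) with ha
  have haherm : aᴴ = a := by
    ext i j
    simp only [ha, conjTranspose_apply, Matrix.of_apply, star_mul', star_star]
    ring
  have hherm : ((Matrix.single 1 1 1 : Matrix (Fin 2) (Fin 2) ℂ) ⊗ₖ a)
      ∈ selfAdjoint (Matrix (Fin 2 × Fin n) (Fin 2 × Fin n) ℂ) := by
    simp only [selfAdjoint.mem_iff, _root_.IsSelfAdjoint, Matrix.star_eq_conjTranspose,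
      kron_conjT', haherm, stdBasis_herm.eq]
  have hH : ((Matrix.single 1 1 1 : Matrix (Fin 2) (Fin 2) ℂ) ⊗ₖ a).IsHermitian := by
    show _ᴴ = _
    rw [kron_conjT', haherm, stdBasis_herm.eq]
  have hpsd : ((Matrix.single 1 1 1 : Matrix (Fin 2) (Fin 2) ℂ) ⊗ₖ a).PosSemidef := by
    refine .of_dotProduct_mulVec_nonneg hH fun w => ?_
    have l1 : star w ⬝ᵥ (((Matrix.single 1 1 1 : Matrix (Fin 2) (Fin 2) ℂ) ⊗ₖ a) *ᵥ w)
        = ∑ i : Fin n, ∑ j : Fin n, star (w (1, i)) * (v i * star (v j)) * w (1, j) := by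
      simp only [dotProduct, mulVec, Pi.star_apply]
      rw [Fintype.sum_prod_type]
      simp only [Fintype.sum_prod_type]
      simp [Fin.sum_univ_two, kroneckerMap_apply, Matrix.of_apply, Matrix.single, ha,
        Finset.mul_sum]
      refine Finset.sum_congr rfl fun i _ => Finset.sum_congr rfl fun j _ => by ring
    have l2 : (∑ i : Fin n, star (w (1, i)) * v i)
          * star (∑ i : Fin n, star (w (1, i)) * v i)
        = ∑ i : Fin n, ∑ j : Fin n, star (w (1, i)) * (v i * star (v j)) * w (1, j) := by
      rw [star_sum, Finset.sum_mul_sum]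
      refine Finset.sum_congr rfl fun i _ => Finset.sum_congr rfl fun j _ => ?_
      rw [star_mul', star_star]
      ring
    rw [l1, ← l2]
    exact mul_star_self_nonneg _
  have h2 := hcausal ⟨_, hherm⟩ hpsd
  have h3 : (ρ (⟨_, hherm⟩ : selfAdjoint (Matrix (Fin 2 × Fin n) (Fin 2 × Fin n) ℂ))
      : Matrix (Fin 2) (Fin 2) ℂ) = lam ρ a • Matrix.single 1 1 1 := by
    rw [← rhoC_coe ρ ⟨_, hherm⟩]
    exact key ρ hinv a _
  have h4 := h2.dotProduct_mulVec_nonneg (Pi.single 1 1)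
  rw [h3] at h4
  simpa [dotProduct, mulVec, Fin.sum_univ_two, Pi.single_apply, Matrix.single]
    using h4

end St18

/-- Any real-linear, Poincaré invariant, causal map from the quantum space-time of
Hermitian operators on ℂ² ⊗ ℂⁿ to Minkowski space (Hermitian 2×2 matrices) is given
by a density matrix σ on the internal space: ρ(x)^{AA'} = Σ_{ij} σ^j_i x^{AA'i}_j. -/
theorem stmt18 (n : ℕ) (hn : 1 ≤ n)
    (ρ : ↥(selfAdjoint (Matrix (Fin 2 × Fin n) (Fin 2 × Fin n) ℂ)) →ₗ[ℝ]
         ↥(selfAdjoint (Matrix (Fin 2) (Fin 2) ℂ)))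
    (hinv : ∀ l : Matrix (Fin 2) (Fin 2) ℂ, l.det = 1 →
      ∀ b : Matrix (Fin 2) (Fin 2) ℂ, b.IsHermitian →
      ∀ x y : ↥(selfAdjoint (Matrix (Fin 2 × Fin n) (Fin 2 × Fin n) ℂ)),
        (y : Matrix (Fin 2 × Fin n) (Fin 2 × Fin n) ℂ)
            = Matrix.kroneckerMap (· * ·) l (1 : Matrix (Fin n) (Fin n) ℂ)
                * (x : Matrix (Fin 2 × Fin n) (Fin 2 × Fin n) ℂ)
                * (Matrix.kroneckerMap (· * ·) l (1 : Matrix (Fin n) (Fin n) ℂ))ᴴ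
              + Matrix.kroneckerMap (· * ·) b (1 : Matrix (Fin n) (Fin n) ℂ) →
        (ρ y : Matrix (Fin 2) (Fin 2) ℂ) = l * (ρ x : Matrix (Fin 2) (Fin 2) ℂ) * lᴴ + b)
    (hcausal : ∀ x : ↥(selfAdjoint (Matrix (Fin 2 × Fin n) (Fin 2 × Fin n) ℂ)),
      (x : Matrix (Fin 2 × Fin n) (Fin 2 × Fin n) ℂ).PosSemidef →
      (ρ x : Matrix (Fin 2) (Fin 2) ℂ).PosSemidef) :
    ∃ σ : Matrix (Fin n) (Fin n) ℂ, σ.PosSemidef ∧ σ.trace = 1 ∧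
      ∀ x : ↥(selfAdjoint (Matrix (Fin 2 × Fin n) (Fin 2 × Fin n) ℂ)), ∀ A A' : Fin 2,
        (ρ x : Matrix (Fin 2) (Fin 2) ℂ) A A'
          = ∑ i : Fin n, ∑ j : Fin n,
              σ j i * (x : Matrix (Fin 2 × Fin n) (Fin 2 × Fin n) ℂ) (A, i) (A', j) := by
  classical
  have hstar : ∀ i j : Fin n, star (St18.lam ρ (Matrix.single i j 1))
      = St18.lam ρ (Matrix.single j i 1) := by
    intro i j
    have h1 := St18.rhoC_conjT ρ
      ((Matrix.single 1 1 1 : Matrix (Fin 2) (Fin 2) ℂ) ⊗ₖ Matrix.single i j 1)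
    rw [St18.kron_conjT', St18.stdBasis_conjT, St18.stdBasis_conjT] at h1
    have h2 := congrFun (congrFun h1 1) 1
    rw [Matrix.conjTranspose_apply] at h2
    exact h2.symm
  refine ⟨Matrix.of (fun p q => St18.lam ρ (Matrix.single q p 1)),
    posSemidef_iff_dotProduct_mulVec.mpr ⟨?_, ?_⟩, ?_, ?_⟩
  · show _ᴴ = _
    ext p q
    rw [Matrix.conjTranspose_apply, Matrix.of_apply, Matrix.of_apply]
    exact hstar p q
  · intro v
    have h := St18.lam_nonneg ρ hinv hcausal v
    rw [St18.lam_expand] at h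
    have e : star v ⬝ᵥ ((Matrix.of fun p q => St18.lam ρ (Matrix.single q p 1)) *ᵥ v)
        = ∑ i : Fin n, ∑ j : Fin n,
            (Matrix.of fun i j => v i * star (v j)) i j
              * St18.lam ρ (Matrix.single i j 1) := by
      simp only [dotProduct, mulVec, Matrix.of_apply, Pi.star_apply, Finset.mul_sum]
      rw [Finset.sum_comm]
      refine Finset.sum_congr rfl fun i _ => Finset.sum_congr rfl fun j _ => by ring
    rw [e]
    exact h
  · have htr : Matrix.trace (Matrix.of fun p q => St18.lam ρ (Matrix.single q p 1))
        = ∑ p : Fin n, St18.lam ρ (Matrix.single p p 1) := rfl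
    rw [htr, ← map_sum, St18.sum_diag_std, St18.lam_one ρ hinv]
  · intro x A A'
    have h := St18.main ρ hinv x A A'
    simpa [Matrix.of_apply] using h
end
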